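/- arXiv:1708.02506 — 2 statements merged into one kernel-verified Lean document; each statement's English description precedes it below -/
import Mathlib

section
/- For every sequence (k₁,k₂,…) of positive integers, μ⋆({w : w < [k₁,k₂,…]}) = 2 Σ_{n=1}^{∞} (-1)^{n+1} 2^{-(k₁+k₂+⋯+k_n)}. In other words, the distribution function of μ⋆ at irrational points of (0,1) is Minkowski's question mark function ?([k₁,k₂,…]) = 2 Σ_{n=1}^{∞} (-1)^{n+1} 2^{-(k₁+⋯+k_n)}. -/
open MeasureTheory ProbabilityTheory Filter
open scoped ENNReal
open scoped Classical

noncomputable def hMap : Fin 9 → ℝ → ℝ :=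
  ![fun x => -x⁻¹,
    fun x => 1 + x,
    fun x => x - 1,
    fun x => 1 - x⁻¹,
    fun x => -1 - x⁻¹,
    fun x => x / (1 + x),
    fun x => x / (1 - x),
    fun x => -(1 + x)⁻¹,
    fun x => (1 - x)⁻¹]

noncomputable def Cfun (x : ℝ) : ℝ := min |x| |x|⁻¹

noncomputable def HMap : Fin 5 → ℝ → ℝ :=
  ![fun x => x,
    fun x => (1 + x)⁻¹,
    fun x => 1 - x,
    fun x => min (x / (1 - x)) ((1 - x) / x),
    fun x => x / (1 + x)]

noncomputable def cfVal (k : ℕ → ℕ) : ℝ :=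
  limUnder atTop (fun n => (((List.range n).map k).foldr (fun a r => ((a : ℝ) + r)⁻¹) 0))

noncomputable def geomHalf : Measure ℕ :=
  Measure.sum (fun n => ((2 : ℝ≥0∞) ^ (n + 1))⁻¹ • Measure.dirac (n + 1))

noncomputable def bern : Measure ℝ :=
  (2 : ℝ≥0∞)⁻¹ • (Measure.dirac 1 + Measure.dirac (-1))

/-- `μ` is the law of the random continued fraction `[K₁,K₂,…]` with `Kᵢ` i.i.d.
geometric of parameter `1/2` (mass `2⁻ⁿ` at `n ≥ 1`). -/
def IsMuStar (μ : Measure ℝ) : Prop :=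
  ∃ (Ω : Type) (_ : MeasurableSpace Ω) (P : Measure Ω) (K : ℕ → Ω → ℕ),
    IsProbabilityMeasure P ∧ (∀ i, Measurable (K i)) ∧
    iIndepFun K P ∧
    (∀ i, P.map (K i) = geomHalf) ∧
    μ = P.map (fun ω => cfVal (fun i => K i ω))

noncomputable def gaussIter : ℕ → ℝ → ℝ
  | 0, x => x
  | n + 1, x => gaussIter n (Int.fract x⁻¹)

/-- the `n`-th digit (starting at `n = 0`) of the continued fraction expansion of `x ∈ (0,1)`. -/
noncomputable def cfDigit (x : ℝ) (n : ℕ) : ℕ := ⌊(gaussIter n x)⁻¹⌋₊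

/-- the Denjoy–Minkowski function of parameter 1/2. -/
noncomputable def chiHalf (y : ℝ) : ℝ :=
  ∑' n : ℕ, (-1 : ℝ) ^ n *
    (2 : ℝ) ^ (-(⌊y⌋ + ∑ j ∈ Finset.range n, (cfDigit (Int.fract y) j : ℤ)))

/-- Minkowski's question mark function evaluated at `[k₁,k₂,…]`. -/
noncomputable def qmark (k : ℕ → ℕ) : ℝ :=
  2 * ∑' n : ℕ, (-1 : ℝ) ^ n * (2 : ℝ) ^ (-(∑ j ∈ Finset.range (n + 1), (k j : ℤ)))




noncomputable def conv (n : ℕ) (k : ℕ → ℕ) : ℝ :=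
  ((List.range n).map k).foldr (fun a r => ((a : ℝ) + r)⁻¹) 0

@[simp] lemma conv_zero (k : ℕ → ℕ) : conv 0 k = 0 := rfl

lemma conv_succ (n : ℕ) (k : ℕ → ℕ) :
    conv (n+1) k = ((k 0 : ℝ) + conv n (fun i => k (i+1)))⁻¹ := by
  simp [conv, List.range_succ_eq_map, List.map_map, Function.comp_def]

def Pos (k : ℕ → ℕ) : Prop := ∀ i, 1 ≤ k i

lemma Pos.tail {k : ℕ → ℕ} (h : Pos k) : Pos (fun i => k (i+1)) := fun i => h (i+1)

lemma conv_nonneg : ∀ n (k : ℕ → ℕ), Pos k → 0 ≤ conv n k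
  | 0, k, _ => le_refl 0
  | n+1, k, hk => by
    rw [conv_succ]
    have h1 : (1:ℝ) ≤ k 0 := by exact_mod_cast hk 0
    have h2 := conv_nonneg n _ hk.tail
    exact inv_nonneg.mpr (by linarith)

lemma conv_le_one : ∀ n (k : ℕ → ℕ), Pos k → conv n k ≤ 1
  | 0, k, _ => by norm_num
  | n+1, k, hk => by
    rw [conv_succ]
    have h1 : (1:ℝ) ≤ k 0 := by exact_mod_cast hk 0
    have h2 := conv_nonneg n _ hk.tail
    rw [inv_le_one_iff₀]
    right; linarith

lemma key_contract (K0 K1 u v c : ℝ) (h0 : 1 ≤ K0) (h1 : 1 ≤ K1)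
    (hu : 0 ≤ u) (hu1 : u ≤ 1) (hv : 0 ≤ v) (hv1 : v ≤ 1) (hc : |u - v| ≤ c) :
    |(K0+(K1+u)⁻¹)⁻¹ - (K0+(K1+v)⁻¹)⁻¹| ≤ 4/9*c := by
  have hK1u : 0 < K1 + u := by linarith
  have hK1v : 0 < K1 + v := by linarith
  have hA : 0 < (K1+u)⁻¹ := inv_pos.mpr hK1u
  have hB : 0 < (K1+v)⁻¹ := inv_pos.mpr hK1v
  have h0A : 0 < K0 + (K1+u)⁻¹ := by linarith
  have h0B : 0 < K0 + (K1+v)⁻¹ := by linarith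
  have hx : (0:ℝ) < (K1+1)⁻¹ := by positivity
  have hAge : (K1+1)⁻¹ ≤ (K1+u)⁻¹ := by
    apply inv_anti₀ hK1u (by linarith)
  have hBge : (K1+1)⁻¹ ≤ (K1+v)⁻¹ := by
    apply inv_anti₀ hK1v (by linarith)
  have key2 : 3/2 ≤ (1 + (K1+1)⁻¹) * K1 := by
    have h : (1 + (K1+1)⁻¹) * K1 = (K1*(K1+2))/(K1+1) := by field_simp; ring
    rw [h, le_div_iff₀ (by linarith)]; nlinarith
  have p1 : 3/2 ≤ (K0 + (K1+u)⁻¹) * (K1+u) := by nlinarith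
  have p2 : 3/2 ≤ (K0 + (K1+v)⁻¹) * (K1+v) := by nlinarith
  have hD : 9/4 ≤ ((K0 + (K1+u)⁻¹) * (K1+u)) * ((K0 + (K1+v)⁻¹) * (K1+v)) := by nlinarith
  have heq : (K0+(K1+u)⁻¹)⁻¹ - (K0+(K1+v)⁻¹)⁻¹
      = (u - v) / (((K0 + (K1+u)⁻¹) * (K1+u)) * ((K0 + (K1+v)⁻¹) * (K1+v))) := by
    field_simp
    ring
  have hDpos : (0:ℝ) < ((K0 + (K1+u)⁻¹) * (K1+u)) * ((K0 + (K1+v)⁻¹) * (K1+v)) := by nlinarith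
  rw [heq, abs_div, abs_of_pos hDpos]
  calc |u - v| / (((K0 + (K1+u)⁻¹) * (K1+u)) * ((K0 + (K1+v)⁻¹) * (K1+v)))
      ≤ c / (9/4) := div_le_div₀ (le_trans (abs_nonneg _) hc) hc (by norm_num) hD
    _ = 4/9 * c := by ring

lemma conv_contract : ∀ (j : ℕ) (k : ℕ → ℕ), Pos k → ∀ n m, 2*j ≤ n → 2*j ≤ m →
    |conv n k - conv m k| ≤ (4/9 : ℝ)^j := by
  intro j
  induction j with
  | zero =>
    intro k hk n m _ _
    have h1 := conv_nonneg n k hk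
    have h2 := conv_le_one n k hk
    have h3 := conv_nonneg m k hk
    have h4 := conv_le_one m k hk
    rw [pow_zero, abs_le]
    constructor <;> linarith
  | succ j ih =>
    intro k hk n m hn hm
    obtain ⟨n', rfl⟩ : ∃ n', n = n' + 2 := ⟨n - 2, by omega⟩
    obtain ⟨m', rfl⟩ : ∃ m', m = m' + 2 := ⟨m - 2, by omega⟩
    rw [conv_succ, conv_succ, conv_succ, conv_succ]
    have h2 : (fun i => (fun i => k (i+1)) (i+1)) = fun i => k (i+2) := rfl
    rw [h2]
    have hk2 : Pos (fun i => k (i+2)) := fun i => hk (i+2)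
    have hK0 : (1:ℝ) ≤ (k 0 : ℝ) := by exact_mod_cast hk 0
    have hK1 : (1:ℝ) ≤ (k 1 : ℝ) := by exact_mod_cast hk 1
    have := key_contract (k 0) (k 1) (conv n' (fun i => k (i+2))) (conv m' (fun i => k (i+2)))
      ((4/9:ℝ)^j) hK0 hK1 (conv_nonneg _ _ hk2) (conv_le_one _ _ hk2)
      (conv_nonneg _ _ hk2) (conv_le_one _ _ hk2)
      (ih _ hk2 n' m' (by omega) (by omega))
    calc _ ≤ 4/9 * (4/9:ℝ)^j := this
      _ = (4/9:ℝ)^(j+1) := by ring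

lemma tendsto_conv {k : ℕ → ℕ} (hk : Pos k) :
    Filter.Tendsto (fun n => conv n k) atTop (nhds (cfVal k)) := by
  have hC : CauchySeq (fun n => conv n k) := by
    rw [Metric.cauchySeq_iff]
    intro ε hε
    obtain ⟨j, hj⟩ : ∃ j : ℕ, (4/9 : ℝ)^j < ε :=
      exists_pow_lt_of_lt_one hε (by norm_num)
    refine ⟨2*j, fun m hm n hn => ?_⟩
    calc dist (conv m k) (conv n k) = |conv m k - conv n k| := Real.dist_eq _ _
      _ ≤ (4/9:ℝ)^j := conv_contract j k hk m n hm hn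
      _ < ε := hj
  obtain ⟨L, hL⟩ := cauchySeq_tendsto_of_complete hC
  have h : cfVal k = L := hL.limUnder_eq
  rw [h]; exact hL

lemma cfVal_nonneg {k : ℕ → ℕ} (hk : Pos k) : 0 ≤ cfVal k :=
  le_of_tendsto_of_tendsto' tendsto_const_nhds (tendsto_conv hk) (fun n => conv_nonneg n k hk)

lemma cfVal_le_one {k : ℕ → ℕ} (hk : Pos k) : cfVal k ≤ 1 :=
  le_of_tendsto_of_tendsto' (tendsto_conv hk) tendsto_const_nhds (fun n => conv_le_one n k hk)

lemma cfVal_rec {k : ℕ → ℕ} (hk : Pos k) :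
    cfVal k = ((k 0 : ℝ) + cfVal (fun i => k (i+1)))⁻¹ := by
  have ht := tendsto_conv hk.tail
  have hK0 : (1:ℝ) ≤ (k 0 : ℝ) := by exact_mod_cast hk 0
  have hpos : (0:ℝ) < (k 0 : ℝ) + cfVal (fun i => k (i+1)) := by
    have := cfVal_nonneg hk.tail; linarith
  have h2 : Filter.Tendsto (fun n => conv (n+1) k) atTop
      (nhds (((k 0 : ℝ) + cfVal (fun i => k (i+1)))⁻¹)) := by
    simp only [conv_succ]
    exact ((tendsto_const_nhds.add ht).inv₀ (ne_of_gt hpos))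
  have h3 : Filter.Tendsto (fun n => conv (n+1) k) atTop (nhds (cfVal k)) :=
    (tendsto_conv hk).comp (tendsto_add_atTop_nat 1)
  exact tendsto_nhds_unique h3 h2

lemma cfVal_pos {k : ℕ → ℕ} (hk : Pos k) : 0 < cfVal k := by
  rw [cfVal_rec hk]
  have hK0 : (1:ℝ) ≤ (k 0 : ℝ) := by exact_mod_cast hk 0
  have := cfVal_nonneg hk.tail
  positivity

lemma cfVal_lt_inv {k : ℕ → ℕ} (hk : Pos k) : cfVal k < ((k 0 : ℝ))⁻¹ := by
  rw [cfVal_rec hk]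
  have hK0 : (0:ℝ) < (k 0 : ℝ) := by exact_mod_cast hk 0
  have h := cfVal_pos hk.tail
  exact inv_strictAnti₀ hK0 (by linarith)

lemma cfVal_gt {k : ℕ → ℕ} (hk : Pos k) : ((k 0 : ℝ) + 1)⁻¹ < cfVal k := by
  rw [cfVal_rec hk]
  have hK0 : (0:ℝ) < (k 0 : ℝ) := by exact_mod_cast hk 0
  have h1 : cfVal (fun i => k (i+1)) < 1 := by
    have := cfVal_lt_inv hk.tail
    have hK1 : (1:ℝ) ≤ (k 1 : ℝ) := by exact_mod_cast hk 1
    have : ((k 1:ℝ))⁻¹ ≤ 1 := by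
      rw [inv_le_one_iff₀]; right; exact hK1
    calc cfVal (fun i => k (i+1)) < ((k 1:ℝ))⁻¹ := cfVal_lt_inv hk.tail
      _ ≤ 1 := this
  exact inv_strictAnti₀ (by have := cfVal_pos hk.tail; linarith) (by linarith)

lemma cfVal_lt_one {k : ℕ → ℕ} (hk : Pos k) : cfVal k < 1 := by
  have h := cfVal_lt_inv hk
  have hK0 : (1:ℝ) ≤ (k 0 : ℝ) := by exact_mod_cast hk 0
  have : ((k 0:ℝ))⁻¹ ≤ 1 := by rw [inv_le_one_iff₀]; right; exact hK0
  linarith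

/-- the comparison condition at the first index of disagreement. -/
def cnd (n : ℕ) (a b : ℕ) : Prop := if Even n then b < a else a < b

lemma cf_lt : ∀ (n : ℕ) (a b : ℕ → ℕ), Pos a → Pos b → (∀ i, i < n → a i = b i) →
    cnd n (a n) (b n) → cfVal a < cfVal b := by
  intro n
  induction n with
  | zero =>
    intro a b ha hb _ hcnd
    have h : b 0 < a 0 := by simpa [cnd] using hcnd
    have h1 : ((b 0 : ℝ) + 1) ≤ (a 0 : ℝ) := by exact_mod_cast h
    calc cfVal a < ((a 0:ℝ))⁻¹ := cfVal_lt_inv ha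
      _ ≤ ((b 0:ℝ)+1)⁻¹ := by
        apply inv_anti₀ (by positivity) h1
      _ < cfVal b := cfVal_gt hb
  | succ n ih =>
    intro a b ha hb hagree hcnd
    have h0 : a 0 = b 0 := hagree 0 (Nat.succ_pos n)
    have htail : cfVal (fun i => b (i+1)) < cfVal (fun i => a (i+1)) := by
      apply ih _ _ hb.tail ha.tail
      · intro i hi; exact (hagree (i+1) (by omega)).symm
      · unfold cnd at hcnd ⊢
        rcases Nat.even_or_odd n with he | ho
        · rw [if_pos he]
          rw [if_neg (by simpa using he.add_one)] at hcnd
          exact hcnd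
        · rw [if_neg (by simpa using ho)]
          rw [if_pos (by simpa using ho.add_one)] at hcnd
          exact hcnd
    rw [cfVal_rec ha, cfVal_rec hb, h0]
    apply inv_strictAnti₀
    · have := cfVal_pos hb.tail
      have : (1:ℝ) ≤ (b 0 : ℝ) := by exact_mod_cast hb 0
      linarith [cfVal_pos hb.tail]
    · exact (add_lt_add_iff_left _).mpr htail

lemma cf_lt_iff {a b : ℕ → ℕ} (ha : Pos a) (hb : Pos b) :
    cfVal a < cfVal b ↔ ∃ n, (∀ i, i < n → a i = b i) ∧ cnd n (a n) (b n) := by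
  constructor
  · intro h
    by_cases hab : ∀ i, a i = b i
    · exfalso; rw [funext hab] at h; exact lt_irrefl _ h
    · push_neg at hab
      obtain ⟨i0, hi0⟩ := hab
      have hex : ∃ i, a i ≠ b i := ⟨i0, hi0⟩
      set n := Nat.find hex with hn
      have hagree : ∀ i, i < n → a i = b i := fun i hi => by
        by_contra hne
        exact Nat.find_min hex hi hne
      have hne : a n ≠ b n := Nat.find_spec hex
      rcases lt_or_gt_of_ne hne with hlt | hgt
      · -- a n < b n
        rcases Nat.even_or_odd n with he | ho
        · -- Even n: then cnd n (b n) (a n) holds for pair (b,a): cfVal b < cfVal a, contradiction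
          exfalso
          have : cfVal b < cfVal a := by
            apply cf_lt n b a hb ha (fun i hi => (hagree i hi).symm)
            unfold cnd; rw [if_pos he]; exact hlt
          linarith
        · exact ⟨n, hagree, by unfold cnd; rw [if_neg (by simpa using ho)]; exact hlt⟩
      · rcases Nat.even_or_odd n with he | ho
        · exact ⟨n, hagree, by unfold cnd; rw [if_pos he]; exact hgt⟩
        · exfalso
          have : cfVal b < cfVal a := by
            apply cf_lt n b a hb ha (fun i hi => (hagree i hi).symm)
            unfold cnd; rw [if_neg (by simpa using ho)]; exact hgt
          linarith
  · rintro ⟨n, hagree, hcnd⟩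
    exact cf_lt n a b ha hb hagree hcnd



lemma measurableSet_nat (s : Set ℕ) : MeasurableSet s := by
  exact MeasurableSpace.measurableSet_top

lemma geomHalf_apply (s : Set ℕ) :
    geomHalf s = ∑' n : ℕ, s.indicator (fun x => ((2 : ℝ≥0∞) ^ x)⁻¹) (n + 1) := by
  rw [geomHalf, Measure.sum_apply _ (measurableSet_nat s)]
  congr 1
  ext n
  rw [Measure.smul_apply, Measure.dirac_apply' _ (measurableSet_nat s)]
  by_cases h : n + 1 ∈ s
  · rw [Set.indicator_of_mem h, Set.indicator_of_mem h, Pi.one_apply, smul_eq_mul, mul_one]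
  · rw [Set.indicator_of_notMem h, Set.indicator_of_notMem h, smul_eq_mul, mul_zero]

lemma geomHalf_singleton (m : ℕ) : geomHalf {m + 1} = ((2 : ℝ≥0∞) ^ (m + 1))⁻¹ := by
  rw [geomHalf_apply]
  rw [tsum_eq_single m]
  · rw [Set.indicator_of_mem (Set.mem_singleton _)]
  · intro n hn
    exact Set.indicator_of_notMem (by simp; omega) _

lemma geomHalf_zero : geomHalf {0} = 0 := by
  rw [geomHalf_apply]
  simp

lemma geomHalf_Ioi : ∀ m : ℕ, geomHalf {x | m < x} = ((2 : ℝ≥0∞) ^ m)⁻¹ := by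
  have huniv : geomHalf {x | 0 < x} = 1 := by
    rw [geomHalf_apply]
    have h1 : ∀ n : ℕ, ({x : ℕ | 0 < x}.indicator (fun x => ((2 : ℝ≥0∞) ^ x)⁻¹) (n+1))
        = 2⁻¹ * (2 : ℝ≥0∞)⁻¹ ^ n := by
      intro n
      rw [Set.indicator_of_mem (by simp only [Set.mem_setOf_eq]; omega), pow_succ,
        ENNReal.mul_inv (by simp) (by simp), ENNReal.inv_pow]
      ring
    refine (tsum_congr h1).trans ?_
    rw [ENNReal.tsum_mul_left, ENNReal.tsum_geometric]
    have h3 : ((1:ℝ≥0∞) - 2⁻¹)⁻¹ = 2 := by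
      rw [ENNReal.one_sub_inv_two, inv_inv]
    rw [h3, ENNReal.inv_mul_cancel (by simp) (by simp)]
  intro m
  induction m with
  | zero => simpa using huniv
  | succ m ih =>
    have hsplit : {x : ℕ | m < x} = {m + 1} ∪ {x : ℕ | m + 1 < x} := by
      ext x; simp only [Set.mem_setOf_eq, Set.mem_union, Set.mem_singleton_iff]; omega
    have hdisj : Disjoint ({m+1} : Set ℕ) {x : ℕ | m + 1 < x} := by
      rw [Set.disjoint_left]; rintro x rfl; simp
    have := measure_union (μ := geomHalf) hdisj (measurableSet_nat {x : ℕ | m + 1 < x})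
    rw [← hsplit, ih, geomHalf_singleton] at this
    have hfin : ((2 : ℝ≥0∞) ^ (m+1))⁻¹ ≠ ∞ := by simp
    have h2 : ((2 : ℝ≥0∞) ^ (m+1))⁻¹ + ((2 : ℝ≥0∞) ^ (m+1))⁻¹ = ((2 : ℝ≥0∞) ^ m)⁻¹ := by
      rw [← two_mul, pow_succ, ENNReal.mul_inv (by simp) (by simp),
        mul_comm ((2:ℝ≥0∞)^m)⁻¹ 2⁻¹, ← mul_assoc,
        ENNReal.mul_inv_cancel (by simp) (by simp), one_mul]
    calc geomHalf {x : ℕ | m + 1 < x}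
        = ((2 : ℝ≥0∞) ^ m)⁻¹ - ((2 : ℝ≥0∞) ^ (m+1))⁻¹ := by
          rw [this]; rw [ENNReal.add_sub_cancel_left hfin]
      _ = ((2 : ℝ≥0∞) ^ (m+1))⁻¹ := by
          rw [← h2, ENNReal.add_sub_cancel_left hfin]

lemma geomHalf_univ : geomHalf Set.univ = 1 := by
  have hsplit : (Set.univ : Set ℕ) = {0} ∪ {x : ℕ | 0 < x} := by
    ext x; simp; omega
  rw [hsplit, measure_union (by rw [Set.disjoint_left]; rintro x rfl; simp)
    (measurableSet_nat _), geomHalf_zero, geomHalf_Ioi 0]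
  simp

lemma geomHalf_lt (m : ℕ) : geomHalf {x | x < m + 1} = 1 - 2 * ((2 : ℝ≥0∞) ^ (m+1))⁻¹ := by
  have hsplit : (Set.univ : Set ℕ) = {x : ℕ | x < m + 1} ∪ {x : ℕ | m < x} := by
    ext x; simp; omega
  have hdisj : Disjoint {x : ℕ | x < m + 1} {x : ℕ | m < x} := by
    rw [Set.disjoint_left]; intro x h1 h2; simp at h1 h2; omega
  have h := measure_union (μ := geomHalf) hdisj (measurableSet_nat _)
  rw [← hsplit, geomHalf_univ, geomHalf_Ioi] at h
  have h2 : 2 * ((2 : ℝ≥0∞) ^ (m+1))⁻¹ = ((2:ℝ≥0∞) ^ m)⁻¹ := by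
    rw [pow_succ, ENNReal.mul_inv (by simp) (by simp), ← mul_comm,
      mul_assoc, ENNReal.inv_mul_cancel (by simp) (by simp), mul_one]
  rw [h2, h, ENNReal.add_sub_cancel_right (by simp)]



section series
variable (k : ℕ → ℕ)

noncomputable def qq (n : ℕ) : ℝ := (2 : ℝ) ^ (-(∑ j ∈ Finset.range n, (k j : ℤ)))

noncomputable def pp (n : ℕ) : ℝ := if Even n then qq k (n+1) else qq k n - 2 * qq k (n+1)

variable {k}

lemma qq_pos (n : ℕ) : 0 < qq k n := by unfold qq; positivity

lemma qq_succ_le (hk : ∀ i, 0 < k i) (n : ℕ) : 2 * qq k (n+1) ≤ qq k n := by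
  unfold qq
  rw [Finset.sum_range_succ]
  have h1 : (1:ℤ) ≤ (k n : ℤ) := by exact_mod_cast hk n
  rw [neg_add, zpow_add₀ (by norm_num : (2:ℝ) ≠ 0)]
  have h2 : (2:ℝ) ^ (-(k n : ℤ)) ≤ 2⁻¹ := by
    calc (2:ℝ) ^ (-(k n : ℤ)) ≤ (2:ℝ) ^ (-1 : ℤ) := by
          apply zpow_le_zpow_right₀ (by norm_num) (by omega)
      _ = 2⁻¹ := by norm_num
  have h3 : (0:ℝ) < (2:ℝ) ^ (-(∑ j ∈ Finset.range n, (k j : ℤ))) := by positivity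
  calc 2 * ((2:ℝ) ^ (-(∑ j ∈ Finset.range n, (k j : ℤ))) * (2:ℝ) ^ (-(k n:ℤ)))
      ≤ 2 * ((2:ℝ) ^ (-(∑ j ∈ Finset.range n, (k j : ℤ))) * 2⁻¹) := by
        apply mul_le_mul_of_nonneg_left _ (by norm_num)
        exact mul_le_mul_of_nonneg_left h2 (le_of_lt h3)
    _ = (2:ℝ) ^ (-(∑ j ∈ Finset.range n, (k j : ℤ))) := by ring

lemma qq_le (hk : ∀ i, 0 < k i) (n : ℕ) : qq k n ≤ (2:ℝ)⁻¹ ^ n := by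
  unfold qq
  have h1 : (n:ℤ) ≤ ∑ j ∈ Finset.range n, (k j : ℤ) := by
    calc (n:ℤ) = ∑ j ∈ Finset.range n, 1 := by simp
      _ ≤ _ := Finset.sum_le_sum (fun j _ => by exact_mod_cast hk j)
  calc (2:ℝ) ^ (-(∑ j ∈ Finset.range n, (k j : ℤ))) ≤ (2:ℝ) ^ (-(n:ℤ)) :=
        zpow_le_zpow_right₀ (by norm_num) (by omega)
    _ = (2:ℝ)⁻¹ ^ n := by
        rw [zpow_neg, zpow_natCast, inv_pow]

lemma pp_nonneg (hk : ∀ i, 0 < k i) (n : ℕ) : 0 ≤ pp k n := by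
  unfold pp
  split_ifs
  · exact le_of_lt (qq_pos _)
  · have := qq_succ_le hk n; linarith

lemma pp_le (hk : ∀ i, 0 < k i) (n : ℕ) : pp k n ≤ (2:ℝ)⁻¹ ^ n := by
  unfold pp
  split_ifs
  · calc qq k (n+1) ≤ (2:ℝ)⁻¹ ^ (n+1) := qq_le hk (n+1)
      _ ≤ (2:ℝ)⁻¹ ^ n := by
        apply pow_le_pow_of_le_one (by norm_num) (by norm_num); omega
  · have h1 := qq_succ_le hk n
    have h2 := qq_pos (k := k) (n+1)
    have := qq_le hk n
    linarith

lemma summable_pp (hk : ∀ i, 0 < k i) : Summable (pp k) := by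
  apply Summable.of_nonneg_of_le (pp_nonneg hk) (pp_le hk)
  exact summable_geometric_of_lt_one (by norm_num) (by norm_num)

lemma summable_gg (hk : ∀ i, 0 < k i) : Summable (fun n => 2 * ((-1:ℝ)^n * qq k (n+1))) := by
  have h : ∀ n : ℕ, |2 * ((-1:ℝ)^n * qq k (n+1))| ≤ (2:ℝ)⁻¹ ^ n := by
    intro n
    have hq := qq_pos (k := k) (n+1)
    have hle := qq_le hk (n+1)
    rw [abs_mul, abs_mul, abs_pow, abs_neg, abs_one, one_pow, one_mul,
      abs_of_pos hq, abs_of_pos (by norm_num : (0:ℝ) < 2)]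
    calc 2 * qq k (n+1) ≤ 2 * (2:ℝ)⁻¹^(n+1) := by linarith
      _ = (2:ℝ)⁻¹ ^ n := by rw [pow_succ]; ring
  exact Summable.of_abs (Summable.of_nonneg_of_le (fun n => abs_nonneg _) h
    (summable_geometric_of_lt_one (by norm_num) (by norm_num)))

lemma partial_eq (hk : ∀ i, 0 < k i) : ∀ m : ℕ,
    ∑ i ∈ Finset.range (2*m), pp k i = ∑ i ∈ Finset.range (2*m), 2 * ((-1:ℝ)^i * qq k (i+1)) := by
  intro m
  induction m with
  | zero => simp
  | succ m ih =>
    have h : 2*(m+1) = (2*m)+1+1 := by ring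
    rw [h, Finset.sum_range_succ, Finset.sum_range_succ,
      Finset.sum_range_succ, Finset.sum_range_succ, ih]
    have he : Even (2*m) := even_two_mul m
    have ho : ¬ Even (2*m+1) := by simp [Nat.even_add_one, he]
    have hp1 : pp k (2*m) = qq k (2*m+1) := by unfold pp; rw [if_pos he]
    have hp2 : pp k (2*m+1) = qq k (2*m+1) - 2 * qq k (2*m+2) := by unfold pp; rw [if_neg ho]
    have hg1 : ((-1:ℝ))^(2*m) = 1 := he.neg_one_pow
    have hg2 : ((-1:ℝ))^(2*m+1) = -1 := by
      rw [pow_succ, hg1, one_mul]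
    rw [hp1, hp2, hg1, hg2]
    ring

lemma tsum_pp (hk : ∀ i, 0 < k i) : ∑' n, pp k n = qmark k := by
  have hsp := summable_pp hk
  have hsg := summable_gg hk
  have h2m : Tendsto (fun m : ℕ => 2*m) atTop atTop :=
    tendsto_atTop_atTop_of_monotone (fun a b hab => by omega) (fun b => ⟨b, by omega⟩)
  have t1 : Tendsto (fun m : ℕ => ∑ i ∈ Finset.range (2*m), pp k i) atTop
      (nhds (∑' n, pp k n)) := hsp.hasSum.tendsto_sum_nat.comp h2m
  have t2 : Tendsto (fun m : ℕ => ∑ i ∈ Finset.range (2*m), 2 * ((-1:ℝ)^i * qq k (i+1))) atTop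
      (nhds (∑' n, 2 * ((-1:ℝ)^n * qq k (n+1)))) := hsg.hasSum.tendsto_sum_nat.comp h2m
  rw [funext (partial_eq hk)] at t1
  have := tendsto_nhds_unique t1 t2
  rw [this, tsum_mul_left]
  rfl

end series

lemma qq_succ_eq (k : ℕ → ℕ) (n : ℕ) : qq k (n+1) = qq k n * (2:ℝ) ^ (-(k n : ℤ)) := by
  unfold qq
  rw [Finset.sum_range_succ, neg_add, zpow_add₀ (by norm_num : (2:ℝ) ≠ 0)]

lemma prod_qq (k : ℕ → ℕ) (n : ℕ) :
    ∏ i ∈ Finset.range n, (2:ℝ)^(-(k i:ℤ)) = qq k n := by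
  induction n with
  | zero => simp [qq]
  | succ n ih => rw [Finset.prod_range_succ, ih, qq_succ_eq]

lemma bridge (m : ℕ) : ((2:ℝ≥0∞)^m)⁻¹ = ENNReal.ofReal ((2:ℝ)^(-(m:ℤ))) := by
  rw [zpow_neg, zpow_natCast, ENNReal.ofReal_inv_of_pos (by positivity),
    ENNReal.ofReal_pow (by norm_num)]
  norm_num

lemma meas_conv {Ω : Type} [MeasurableSpace Ω] :
    ∀ (n : ℕ) (K : ℕ → Ω → ℕ), (∀ i, Measurable (K i)) →
      Measurable (fun ω => conv n (fun i => K i ω))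
  | 0, K, _ => measurable_const
  | n+1, K, hK => by
    simp only [conv_succ]
    have ih := meas_conv n (fun i => K (i+1)) (fun i => hK (i+1))
    exact ((measurable_from_nat.comp (hK 0)).add ih).inv

theorem stmt10 (μ : Measure ℝ) (hμ : IsMuStar μ)
    (k : ℕ → ℕ) (hk : ∀ i, 0 < k i) :
    μ {w : ℝ | w < cfVal k} = ENNReal.ofReal (qmark k) := by

  obtain ⟨Ω, mΩ, P, K, hP, hK, hindep, hmap, hμeq⟩ := hμ
  have hkpos : Pos k := fun i => hk i
  have hpre : ∀ (i : ℕ) (s : Set ℕ), P (K i ⁻¹' s) = geomHalf s := by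
    intro i s
    rw [← hmap i, Measure.map_apply (hK i) (measurableSet_nat s)]
  set A : Set Ω := ⋂ i, K i ⁻¹' {x | 1 ≤ x} with hA
  have hmemA : ∀ ω, ω ∈ A → ∀ i, 1 ≤ K i ω := by
    intro ω hω i
    have := Set.mem_iInter.mp hω i
    exact this
  have hAc : P Aᶜ = 0 := by
    have hAeq : Aᶜ = ⋃ i, K i ⁻¹' {0} := by
      ext ω
      simp only [hA, Set.mem_compl_iff, Set.mem_iInter, Set.mem_iUnion,
        Set.mem_preimage, Set.mem_setOf_eq, Set.mem_singleton_iff, not_forall]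
      constructor
      · rintro ⟨i, hi⟩; exact ⟨i, by omega⟩
      · rintro ⟨i, hi⟩; exact ⟨i, by omega⟩
    rw [hAeq]
    apply measure_iUnion_null
    intro i
    rw [hpre, geomHalf_zero]
  have hAE : AEMeasurable (fun ω => cfVal (fun i => K i ω)) P := by
    apply aemeasurable_of_tendsto_metrizable_ae atTop
      (fun n => (meas_conv n K hK).aemeasurable)
    rw [ae_iff]
    apply measure_mono_null _ hAc
    intro ω hω
    simp only [Set.mem_setOf_eq] at hω
    rw [Set.mem_compl_iff]
    intro hωA
    exact hω (tendsto_conv (fun i => hmemA ω hωA i))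
  set E : ℕ → Set Ω := fun n =>
    ⋂ i ∈ Finset.range (n+1), K i ⁻¹' (if i = n then {x | cnd n x (k n)} else {k i}) with hE
  have hEmeas : ∀ n, MeasurableSet (E n) := by
    intro n
    apply MeasurableSet.biInter (Finset.range (n+1)).countable_toSet
    intro i _
    exact (hK i) (measurableSet_nat _)
  have hmemE : ∀ n ω, ω ∈ E n ↔ ((∀ i, i < n → K i ω = k i) ∧ cnd n (K n ω) (k n)) := by
    intro n ω
    simp only [hE, Set.mem_iInter, Finset.mem_range, Set.mem_preimage]
    constructor
    · intro h
      refine ⟨fun i hi => ?_, ?_⟩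
      · have h2 := h i (by omega)
        rw [if_neg (by omega)] at h2
        exact h2
      · have h2 := h n (by omega)
        rw [if_pos rfl] at h2
        exact h2
    · rintro ⟨h1, h2⟩ i hi
      by_cases hin : i = n
      · subst hin; rw [if_pos rfl]; exact h2
      · rw [if_neg hin]; exact h1 i (by omega)
  have hcnd_ne : ∀ n a b, cnd n a b → a ≠ b := by
    intro n a b h
    unfold cnd at h
    split_ifs at h <;> omega
  have hdisj : Pairwise (Function.onFun Disjoint E) := by
    have key : ∀ m n, m < n → Disjoint (E m) (E n) := by
      intro m n hlt
      rw [Set.disjoint_left]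
      intro ω hm hn
      obtain ⟨h1m, h2m⟩ := (hmemE m ω).mp hm
      obtain ⟨h1n, _⟩ := (hmemE n ω).mp hn
      exact hcnd_ne m _ _ h2m (h1n m hlt)
    intro m n hmn
    rcases lt_or_gt_of_ne hmn with h | h
    · exact key m n h
    · exact (key n m h).symm
  have hset : (fun ω => cfVal (fun i => K i ω)) ⁻¹' {w | w < cfVal k} ∩ A
      = (⋃ n, E n) ∩ A := by
    ext ω
    simp only [Set.mem_inter_iff, Set.mem_preimage, Set.mem_setOf_eq, Set.mem_iUnion]
    constructor
    · rintro ⟨hlt, hωA⟩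
      refine ⟨?_, hωA⟩
      obtain ⟨n, h1, h2⟩ := (cf_lt_iff (fun i => hmemA ω hωA i) hkpos).mp hlt
      exact ⟨n, (hmemE n ω).mpr ⟨h1, h2⟩⟩
    · rintro ⟨⟨n, hn⟩, hωA⟩
      refine ⟨?_, hωA⟩
      obtain ⟨h1, h2⟩ := (hmemE n ω).mp hn
      exact (cf_lt_iff (fun i => hmemA ω hωA i) hkpos).mpr ⟨n, h1, h2⟩
  have hEn : ∀ n, P (E n) = ENNReal.ofReal (pp k n) := by
    intro n
    have hprod := (iIndepFun_iff_measure_inter_preimage_eq_mul.mp hindep)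
      (Finset.range (n+1))
      (sets := fun i => if i = n then {x | cnd n x (k n)} else {k i})
      (fun i _ => measurableSet_nat _)
    rw [hE]
    rw [hprod, Finset.prod_range_succ]
    have hmain : ∀ i, i ∈ Finset.range n →
        P (K i ⁻¹' (if i = n then {x | cnd n x (k n)} else {k i}))
          = ENNReal.ofReal ((2:ℝ)^(-(k i:ℤ))) := by
      intro i hi
      rw [Finset.mem_range] at hi
      rw [if_neg (by omega), hpre]
      obtain ⟨m, hm⟩ : ∃ m, k i = m + 1 := ⟨k i - 1, by have := hk i; omega⟩
      rw [hm, geomHalf_singleton, ← hm, bridge]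
    rw [Finset.prod_congr rfl hmain, ← ENNReal.ofReal_prod_of_nonneg
      (fun i _ => by positivity), prod_qq]
    have hlast : (fun i => if i = n then {x | cnd n x (k n)} else ({k i} : Set ℕ)) n
        = {x | cnd n x (k n)} := by simp
    rw [if_pos rfl, hpre]
    unfold pp
    rcases Nat.even_or_odd n with he | ho
    · have hsetn : {x : ℕ | cnd n x (k n)} = {x : ℕ | k n < x} := by
        ext x; simp only [cnd, Set.mem_setOf_eq, if_pos he]
      rw [hsetn, geomHalf_Ioi, bridge, ← ENNReal.ofReal_mul (le_of_lt (qq_pos n)),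
        ← qq_succ_eq, if_pos he]
    · have hno : ¬ Even n := by simpa using ho
      have hsetn : {x : ℕ | cnd n x (k n)} = {x : ℕ | x < k n} := by
        ext x; simp only [cnd, Set.mem_setOf_eq, if_neg hno]
      obtain ⟨m, hm⟩ : ∃ m, k n = m + 1 := ⟨k n - 1, by have := hk n; omega⟩
      rw [hsetn, hm, geomHalf_lt, ← hm]
      have hb : (1:ℝ≥0∞) - 2 * ((2:ℝ≥0∞)^(k n))⁻¹
          = ENNReal.ofReal (1 - 2 * (2:ℝ)^(-(k n:ℤ))) := by
        rw [ENNReal.ofReal_sub _ (by positivity), ENNReal.ofReal_one,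
          ENNReal.ofReal_mul (by norm_num), ← bridge]
        norm_num
      rw [hb, ← ENNReal.ofReal_mul (le_of_lt (qq_pos n)), if_neg hno]
      congr 1
      rw [qq_succ_eq k n]
      ring
  have hnonneg : ∀ n, 0 ≤ pp k n := pp_nonneg hk
  calc μ {w : ℝ | w < cfVal k}
      = P ((fun ω => cfVal (fun i => K i ω)) ⁻¹' {w | w < cfVal k}) := by
        rw [hμeq]
        exact Measure.map_apply_of_aemeasurable hAE measurableSet_Iio
    _ = P ((fun ω => cfVal (fun i => K i ω)) ⁻¹' {w | w < cfVal k} ∩ A) :=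
        (measure_inter_conull hAc).symm
    _ = P ((⋃ n, E n) ∩ A) := by rw [hset]
    _ = P (⋃ n, E n) := measure_inter_conull hAc
    _ = ∑' n, P (E n) := measure_iUnion hdisj hEmeas
    _ = ∑' n, ENNReal.ofReal (pp k n) := tsum_congr hEn
    _ = ENNReal.ofReal (∑' n, pp k n) :=
        (ENNReal.ofReal_tsum_of_nonneg hnonneg (summable_pp hk)).symm
    _ = ENNReal.ofReal (qmark k) := by rw [tsum_pp hk]
end

section
/- The measure μ⋆ is stationary for the Markov chain W_{n+1} = H_{I_{n+1}}(W_n) on [0,1], where the I_n are i.i.d. with P(I=0)=1/9 and P(I=i)=2/9 for i=1,2,3,4; that is, (1/9)(H₀)_*μ⋆ + (2/9) Σ_{i=1}^{4} (H_i)_*μ⋆ = μ⋆. -/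
open MeasureTheory ProbabilityTheory Filter
open scoped ENNReal

namespace S12
open Set Topology

def shf (k : ℕ → ℕ) : ℕ → ℕ := fun i => k (i + 1)
def consg (a : ℕ) (k : ℕ → ℕ) : ℕ → ℕ := fun i => if i = 0 then a else k (i - 1)
def bump (k : ℕ → ℕ) : ℕ → ℕ := fun i => if i = 0 then k 0 + 1 else k i
def dec (k : ℕ → ℕ) : ℕ → ℕ := fun i => if i = 0 then k 0 - 1 else k i
def T2 (k : ℕ → ℕ) : ℕ → ℕ := if k 0 = 1 then bump (shf k) else consg 1 (dec k)
def T3 (k : ℕ → ℕ) : ℕ → ℕ := if k 0 = 1 then shf k else dec k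
def upd0 (g : ℕ → ℕ) (a : ℕ) : ℕ → ℕ := fun i => if i = 0 then a else g i
def dval (a : ℕ) : ℕ := if a = 0 then 0 else a + 1

lemma shf_consg (a : ℕ) (k : ℕ → ℕ) : shf (consg a k) = k := by funext i; simp [shf, consg]
lemma shf_bump (k : ℕ → ℕ) : shf (bump k) = shf k := by funext i; simp [shf, bump]
lemma shf_dec (k : ℕ → ℕ) : shf (dec k) = shf k := by funext i; simp [shf, dec]
lemma shf_upd0 (g : ℕ → ℕ) (a : ℕ) : shf (upd0 g a) = shf g := by funext i; simp [shf, upd0]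
@[simp] lemma consg_zero (a : ℕ) (k : ℕ → ℕ) : consg a k 0 = a := rfl
@[simp] lemma consg_succ (a : ℕ) (k : ℕ → ℕ) (i : ℕ) : consg a k (i+1) = k i := rfl
@[simp] lemma bump_zero (k : ℕ → ℕ) : bump k 0 = k 0 + 1 := rfl
@[simp] lemma dec_zero (k : ℕ → ℕ) : dec k 0 = k 0 - 1 := rfl
@[simp] lemma upd0_zero (g : ℕ → ℕ) (a : ℕ) : upd0 g a 0 = a := rfl
@[simp] lemma upd0_succ (g : ℕ → ℕ) (a : ℕ) (i : ℕ) : upd0 g a (i+1) = g (i+1) := rfl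
@[simp] lemma shf_zero (g : ℕ → ℕ) : shf g 0 = g 1 := rfl

/-! ### measurability of the digit maps -/

lemma measurable_shf : Measurable shf :=
  measurable_pi_lambda _ fun i => measurable_pi_apply (i + 1)

lemma measurable_consg1 : Measurable (consg 1) := by
  apply measurable_pi_lambda
  intro i
  rcases i with _ | j
  · exact measurable_const
  · exact measurable_pi_apply j

lemma measurable_bump : Measurable bump := by
  apply measurable_pi_lambda
  intro i
  rcases i with _ | j
  · exact (measurable_of_countable (fun m : ℕ => m + 1)).comp (measurable_pi_apply 0)
  · exact measurable_pi_apply (j+1)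

lemma measurable_dec : Measurable dec := by
  apply measurable_pi_lambda
  intro i
  rcases i with _ | j
  · exact (measurable_of_countable (fun m : ℕ => m - 1)).comp (measurable_pi_apply 0)
  · exact measurable_pi_apply (j+1)

lemma measurableSet_eq1 : MeasurableSet {f : ℕ → ℕ | f 0 = 1} :=
  measurable_pi_apply 0 (measurableSet_singleton 1)

lemma measurable_T2 : Measurable T2 :=
  Measurable.ite measurableSet_eq1 (measurable_bump.comp measurable_shf)
    (measurable_consg1.comp measurable_dec)

lemma measurable_T3 : Measurable T3 :=
  Measurable.ite measurableSet_eq1 measurable_shf measurable_dec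

/-! ### the weights -/

noncomputable def w (m : ℕ) : ℝ≥0∞ := geomHalf {m}

lemma w_zero : w 0 = 0 := by
  unfold w geomHalf
  rw [Measure.sum_apply _ (measurableSet_singleton _)]
  simp [Measure.dirac_apply]

lemma w_succ (m : ℕ) : w (m+1) = ((2:ℝ≥0∞)^(m+1))⁻¹ := by
  unfold w geomHalf
  rw [Measure.sum_apply _ (measurableSet_singleton _)]
  rw [tsum_eq_single m]
  · simp [Measure.dirac_apply]
  · intro n hn
    simp [Measure.dirac_apply, Set.indicator_apply, hn]

lemma w_one : w 1 = 2⁻¹ := by rw [w_succ]; norm_num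

lemma w_half (m : ℕ) : w (m+2) = 2⁻¹ * w (m+1) := by
  rw [w_succ, w_succ, pow_succ, ENNReal.mul_inv (by simp) (by simp), mul_comm]

lemma dval_ne_one (a : ℕ) : dval a ≠ 1 := by unfold dval; split <;> omega

/-! ### cylinders -/

def cyl (n : ℕ) (g : ℕ → ℕ) : Set (ℕ → ℕ) := {f | ∀ i < n, f i = g i}

lemma cyl_zero (g : ℕ → ℕ) : cyl 0 g = univ := by ext f; simp [cyl]

lemma mem_cyl_succ {f g : ℕ → ℕ} {n : ℕ} :
    f ∈ cyl (n+1) g ↔ f 0 = g 0 ∧ shf f ∈ cyl n (shf g) := by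
  simp only [cyl, mem_setOf_eq, shf]
  constructor
  · intro h; exact ⟨h 0 (by omega), fun i hi => h (i+1) (by omega)⟩
  · rintro ⟨h0, h⟩ i hi
    rcases i with _ | j
    · exact h0
    · exact h j (by omega)

lemma measurableSet_cyl {n : ℕ} {g : ℕ → ℕ} : MeasurableSet (cyl n g) := by
  have : cyl n g = ⋂ (i : ℕ) (_ : i < n), (fun f : ℕ → ℕ => f i) ⁻¹' {g i} := by
    ext f; simp [cyl]
  rw [this]
  exact MeasurableSet.iInter fun i => MeasurableSet.iInter fun _ =>
    measurable_pi_apply i (measurableSet_singleton _)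

lemma cyl_mem_zero {f g : ℕ → ℕ} {n : ℕ} (h : f ∈ cyl (n+1) g) : f 0 = g 0 :=
  (mem_cyl_succ.mp h).1

/-! ### π-system extension -/

lemma meas_ext {μ ν : Measure (ℕ → ℕ)} [IsFiniteMeasure μ] [IsFiniteMeasure ν]
    (h : ∀ n g, μ (cyl n g) = ν (cyl n g)) : μ = ν := by
  classical
  refine ext_of_generate_finite (measurableCylinders (fun _ : ℕ => ℕ))
    generateFrom_measurableCylinders.symm isPiSystem_measurableCylinders (fun s hs => ?_) ?_
  swap
  · have h0 := h 0 (fun _ => 0); rwa [cyl_zero] at h0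
  obtain ⟨I, S, hSm, rfl⟩ := (mem_measurableCylinders _).mp hs
  set n : ℕ := I.sup id + 1 with hn
  have hIn : ∀ i ∈ I, i < n := fun i hi => Nat.lt_succ_of_le (Finset.le_sup (f := id) hi)
  let ext0 : (Fin n → ℕ) → (ℕ → ℕ) := fun h i => if hi : i < n then h ⟨i, hi⟩ else 0
  let u : (Fin n → ℕ) → Set (ℕ → ℕ) :=
    fun h => if I.restrict (ext0 h) ∈ S then cyl n (ext0 h) else ∅
  have hu_meas : ∀ h, MeasurableSet (u h) := by
    intro h; simp only [u]; split
    · exact measurableSet_cyl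
    · exact MeasurableSet.empty
  have hcover : cylinder I S = ⋃ h, u h := by
    ext f
    simp only [mem_cylinder, mem_iUnion]
    constructor
    · intro hf
      refine ⟨fun j => f j, ?_⟩
      have he : I.restrict (ext0 (fun j : Fin n => f j)) = I.restrict f := by
        funext i
        simp only [Finset.restrict, ext0]
        rw [dif_pos (hIn i i.2)]
      simp only [u, he, if_pos hf]
      intro i hi
      simp only [ext0]
      rw [dif_pos hi]
    · rintro ⟨h0, hfh⟩
      simp only [u] at hfh
      split at hfh
      case isTrue hcond =>
        have he : I.restrict f = I.restrict (ext0 h0) := by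
          funext i
          exact hfh i (hIn i i.2)
        rw [he]; exact hcond
      case isFalse _ => exact absurd hfh (notMem_empty f)
  have hdisj : Pairwise (Function.onFun Disjoint u) := by
    intro h1 h2 hne
    simp only [Function.onFun, u]
    split
    · split
      · rw [Set.disjoint_left]
        intro f hf1 hf2
        apply hne
        funext j
        have e1 : f j = ext0 h1 j := hf1 j j.isLt
        have e2 : f j = ext0 h2 j := hf2 j j.isLt
        have e3 := e1.symm.trans e2
        simp only [ext0, dif_pos j.isLt, Fin.eta] at e3
        exact e3
      · exact disjoint_empty _
    · exact empty_disjoint _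
  rw [hcover, measure_iUnion hdisj hu_meas, measure_iUnion hdisj hu_meas]
  refine tsum_congr fun h0 => ?_
  simp only [u]; split
  · exact h n (ext0 h0)
  · simp

/-! ### preimage computations -/

lemma pre_A (n : ℕ) (g : ℕ → ℕ) :
    {f : ℕ → ℕ | f 0 = 1 ∧ shf f ∈ cyl n g} = cyl (n+1) (consg 1 g) := by
  ext f
  rw [mem_setOf_eq, mem_cyl_succ, shf_consg, consg_zero]

lemma pre_consg (n : ℕ) (g : ℕ → ℕ) :
    consg 1 ⁻¹' cyl (n+1) g = if g 0 = 1 then cyl n (shf g) else ∅ := by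
  ext f
  rw [mem_preimage, mem_cyl_succ, shf_consg, consg_zero]
  split
  case isTrue h => simp [h]
  case isFalse h => simp only [mem_empty_iff_false, iff_false]; rintro ⟨h1, -⟩; exact h h1.symm

lemma pre_bump (n : ℕ) (g : ℕ → ℕ) :
    bump ⁻¹' cyl (n+1) g = if g 0 = 0 then ∅ else cyl (n+1) (upd0 g (g 0 - 1)) := by
  ext f
  rw [mem_preimage, mem_cyl_succ, shf_bump, bump_zero]
  split
  case isTrue h => simp only [mem_empty_iff_false, iff_false]; rintro ⟨h1, -⟩; omega
  case isFalse h =>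
    rw [mem_cyl_succ, shf_upd0, upd0_zero]
    constructor
    · rintro ⟨h1, h2⟩; exact ⟨by omega, h2⟩
    · rintro ⟨h1, h2⟩; exact ⟨by omega, h2⟩

lemma pre_decB (n : ℕ) (g : ℕ → ℕ) :
    {f : ℕ → ℕ | f 0 ≠ 1 ∧ dec f ∈ cyl (n+1) g} = cyl (n+1) (upd0 g (dval (g 0))) := by
  ext f
  rw [mem_setOf_eq, mem_cyl_succ, mem_cyl_succ, shf_dec, shf_upd0, dec_zero, upd0_zero]
  constructor
  · rintro ⟨h1, h2, h3⟩
    refine ⟨?_, h3⟩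
    unfold dval; split <;> omega
  · rintro ⟨h1, h2⟩
    have hd := dval_ne_one (g 0)
    refine ⟨by omega, ?_, h2⟩
    revert h1; unfold dval; split <;> omega

@[simp] lemma shf_app (g : ℕ → ℕ) (i : ℕ) : shf g i = g (i+1) := rfl


noncomputable def F (n : ℕ) (k : ℕ → ℕ) : ℝ :=
  ((List.range n).map k).foldr (fun a r => ((a : ℝ) + r)⁻¹) 0


lemma F_zero (k : ℕ → ℕ) : F 0 k = 0 := rfl

lemma F_succ (n : ℕ) (k : ℕ → ℕ) : F (n+1) k = ((k 0 : ℝ) + F n (shf k))⁻¹ := by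
  unfold F
  rw [List.range_succ_eq_map]
  simp only [List.map_cons, List.foldr_cons, List.map_map]
  rfl

lemma F_bounds (n : ℕ) (k : ℕ → ℕ) (hk : ∀ i, 1 ≤ k i) : 0 ≤ F n k ∧ F n k ≤ 1 := by
  induction n generalizing k with
  | zero => simp [F_zero]
  | succ n ih =>
    rw [F_succ]
    obtain ⟨h0, h1⟩ := ih (shf k) (fun i => hk (i+1))
    have hc : (1 : ℝ) ≤ (k 0 : ℝ) := by exact_mod_cast hk 0
    constructor
    · positivity
    · rw [inv_le_one_iff₀]; right; linarith

lemma key_ineq (a b y y' : ℝ) (ha : 1 ≤ a) (hb : 1 ≤ b) (hy : 0 ≤ y) (hy' : 0 ≤ y') :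
    |(a + (b + y)⁻¹)⁻¹ - (a + (b + y')⁻¹)⁻¹| ≤ 1/4 * |y - y'| := by
  have hby : (0:ℝ) < b + y := by linarith
  have hby' : (0:ℝ) < b + y' := by linarith
  have hD : (2:ℝ) ≤ a * (b + y) + 1 := by nlinarith
  have hD' : (2:ℝ) ≤ a * (b + y') + 1 := by nlinarith
  have hDpos : (0:ℝ) < a * (b + y) + 1 := by linarith
  have hD'pos : (0:ℝ) < a * (b + y') + 1 := by linarith
  have e : (a + (b + y)⁻¹)⁻¹ - (a + (b + y')⁻¹)⁻¹
      = (y - y') / ((a * (b + y) + 1) * (a * (b + y') + 1)) := by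
    rw [eq_div_iff (by positivity)]
    field_simp
    ring
  rw [e, abs_div, abs_of_pos (show (0:ℝ) < (a * (b + y) + 1) * (a * (b + y') + 1) by positivity)]
  have h4 : (4:ℝ) ≤ (a * (b + y) + 1) * (a * (b + y') + 1) := by nlinarith
  calc |y - y'| / ((a * (b + y) + 1) * (a * (b + y') + 1)) ≤ |y - y'| / 4 := by
        gcongr
    _ = 1/4 * |y - y'| := by ring

lemma F_two_step (n m : ℕ) (k : ℕ → ℕ) (hk : ∀ i, 1 ≤ k i) :
    |F (n+2) k - F (m+2) k| ≤ 1/4 * |F n (shf (shf k)) - F m (shf (shf k))| := by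
  have e1 : F (n+2) k = ((k 0 : ℝ) + ((k 1 : ℝ) + F n (shf (shf k)))⁻¹)⁻¹ := by
    rw [show n + 2 = (n+1)+1 from rfl, F_succ, F_succ]; rfl
  have e2 : F (m+2) k = ((k 0 : ℝ) + ((k 1 : ℝ) + F m (shf (shf k)))⁻¹)⁻¹ := by
    rw [show m + 2 = (m+1)+1 from rfl, F_succ, F_succ]; rfl
  rw [e1, e2]
  exact key_ineq _ _ _ _ (by exact_mod_cast hk 0) (by exact_mod_cast hk 1)
    (F_bounds n _ (fun i => hk (i+2))).1 (F_bounds m _ (fun i => hk (i+2))).1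

lemma F_cauchy (j : ℕ) : ∀ (k : ℕ → ℕ), (∀ i, 1 ≤ k i) → ∀ n m, 2*j ≤ n → 2*j ≤ m →
    |F n k - F m k| ≤ (1/4 : ℝ)^j := by
  induction j with
  | zero =>
    intro k hk n m _ _
    obtain ⟨a0, a1⟩ := F_bounds n k hk
    obtain ⟨b0, b1⟩ := F_bounds m k hk
    rw [pow_zero, abs_sub_le_iff]
    constructor <;> linarith
  | succ j ih =>
    intro k hk n m hn hm
    obtain ⟨n', rfl⟩ : ∃ n', n = n' + 2 := ⟨n - 2, by omega⟩
    obtain ⟨m', rfl⟩ : ∃ m', m = m' + 2 := ⟨m - 2, by omega⟩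
    calc |F (n'+2) k - F (m'+2) k| ≤ 1/4 * |F n' (shf (shf k)) - F m' (shf (shf k))| :=
          F_two_step n' m' k hk
      _ ≤ 1/4 * (1/4)^j := by
          have := ih (shf (shf k)) (fun i => hk (i+2)) n' m' (by omega) (by omega)
          nlinarith [abs_nonneg (F n' (shf (shf k)) - F m' (shf (shf k)))]
      _ = (1/4)^(j+1) := by ring

lemma cauchySeq_F (k : ℕ → ℕ) (hk : ∀ i, 1 ≤ k i) : CauchySeq (fun n => F n k) := by
  apply cauchySeq_of_le_tendsto_0 (fun N => 2 * (1/2 : ℝ)^N)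
  · intro n m N hn hm
    rw [Real.dist_eq]
    calc |F n k - F m k| ≤ (1/4 : ℝ)^(N/2) :=
          F_cauchy (N/2) k hk n m (by omega) (by omega)
      _ = (1/2 : ℝ)^(2*(N/2)) := by rw [pow_mul]; norm_num
      _ ≤ (1/2 : ℝ)^(N-1) := by
          apply pow_le_pow_of_le_one (by norm_num) (by norm_num); omega
      _ ≤ 2 * (1/2)^N := by
          rcases N with _ | s
          · norm_num
          · rw [Nat.add_sub_cancel, pow_succ]; ring_nf; norm_num
  · have h := tendsto_pow_atTop_nhds_zero_of_lt_one (by norm_num : (0:ℝ) ≤ 1/2) (by norm_num)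
    simpa using h.const_mul (2:ℝ)

lemma tendsto_F_cfVal (k : ℕ → ℕ) (hk : ∀ i, 1 ≤ k i) :
    Tendsto (fun n => F n k) atTop (𝓝 (cfVal k)) := by
  obtain ⟨L, hL⟩ := cauchySeq_tendsto_of_complete (cauchySeq_F k hk)
  have h : cfVal k = L := hL.limUnder_eq
  rw [h]; exact hL

lemma cfVal_nonneg (k : ℕ → ℕ) (hk : ∀ i, 1 ≤ k i) : 0 ≤ cfVal k :=
  ge_of_tendsto' (tendsto_F_cfVal k hk) (fun n => (F_bounds n k hk).1)

lemma cfVal_le_one (k : ℕ → ℕ) (hk : ∀ i, 1 ≤ k i) : cfVal k ≤ 1 :=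
  le_of_tendsto' (tendsto_F_cfVal k hk) (fun n => (F_bounds n k hk).2)

lemma cfVal_rec (k : ℕ → ℕ) (hk : ∀ i, 1 ≤ k i) :
    cfVal k = ((k 0 : ℝ) + cfVal (shf k))⁻¹ := by
  have hks : ∀ i, 1 ≤ shf k i := fun i => hk (i+1)
  have hc : (1:ℝ) ≤ (k 0 : ℝ) := by exact_mod_cast hk 0
  have hy := cfVal_nonneg (shf k) hks
  have h1 : Tendsto (fun n => F (n+1) k) atTop (𝓝 (cfVal k)) :=
    (tendsto_F_cfVal k hk).comp (tendsto_add_atTop_nat 1)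
  have h2 : Tendsto (fun n => ((k 0 : ℝ) + F n (shf k))⁻¹) atTop
      (𝓝 (((k 0 : ℝ) + cfVal (shf k))⁻¹)) := by
    apply Tendsto.inv₀
    · exact (tendsto_F_cfVal (shf k) hks).const_add _
    · positivity
  have h1' : Tendsto (fun n => ((k 0 : ℝ) + F n (shf k))⁻¹) atTop (𝓝 (cfVal k)) := by
    have : (fun n => F (n+1) k) = fun n => ((k 0 : ℝ) + F n (shf k))⁻¹ := by
      funext n; exact F_succ n k
    rwa [this] at h1
  exact tendsto_nhds_unique h1' h2

lemma cfVal_pos (k : ℕ → ℕ) (hk : ∀ i, 1 ≤ k i) : 0 < cfVal k := by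
  rw [cfVal_rec k hk]
  have hc : (1:ℝ) ≤ (k 0 : ℝ) := by exact_mod_cast hk 0
  have hy := cfVal_nonneg (shf k) (fun i => hk (i+1))
  positivity

lemma cfVal_lt_one (k : ℕ → ℕ) (hk : ∀ i, 1 ≤ k i) : cfVal k < 1 := by
  rw [cfVal_rec k hk]
  have hc : (1:ℝ) ≤ (k 0 : ℝ) := by exact_mod_cast hk 0
  have hy := cfVal_pos (shf k) (fun i => hk (i+1))
  rw [inv_lt_one_iff₀]; right; linarith

lemma measurable_F (n : ℕ) : Measurable (F n) := by
  induction n with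
  | zero =>
    have h : F 0 = fun _ : ℕ → ℕ => (0:ℝ) := funext fun k => rfl
    rw [h]; exact measurable_const
  | succ n ih =>
    have h : F (n+1) = fun k => ((k 0 : ℝ) + F n (shf k))⁻¹ := funext fun k => F_succ n k
    rw [h]
    exact (((measurable_of_countable (fun m : ℕ => (m:ℝ))).comp
      (measurable_pi_apply 0)).add (ih.comp measurable_shf)).inv






lemma good_shf {k : ℕ → ℕ} (hk : ∀ i, 1 ≤ k i) : ∀ i, 1 ≤ shf k i := fun i => hk (i+1)
lemma good_consg {a : ℕ} (ha : 1 ≤ a) {k : ℕ → ℕ} (hk : ∀ i, 1 ≤ k i) :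
    ∀ i, 1 ≤ consg a k i := by
  intro i
  rcases i with _ | j
  · simpa [consg] using ha
  · simpa [consg] using hk j
lemma good_bump {k : ℕ → ℕ} (hk : ∀ i, 1 ≤ k i) : ∀ i, 1 ≤ bump k i := by
  intro i
  rcases i with _ | j
  · show 1 ≤ k 0 + 1; omega
  · simpa [bump] using hk (j+1)
lemma good_dec {k : ℕ → ℕ} (hk : ∀ i, 1 ≤ k i) (h2 : 2 ≤ k 0) : ∀ i, 1 ≤ dec k i := by
  intro i
  rcases i with _ | j
  · show 1 ≤ k 0 - 1; omega
  · simpa [dec] using hk (j+1)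

lemma HMap_one : HMap 1 = fun x => (1 + x)⁻¹ := rfl
lemma HMap_two : HMap 2 = fun x => 1 - x := rfl
lemma HMap_three : HMap 3 = fun x => min (x / (1 - x)) ((1 - x) / x) := rfl
lemma HMap_four : HMap 4 = fun x => x / (1 + x) := rfl

lemma measurable_HMap1 : Measurable (HMap 1) := by
  rw [HMap_one]; exact (measurable_const.add measurable_id).inv
lemma measurable_HMap2 : Measurable (HMap 2) := by
  rw [HMap_two]; exact measurable_const.sub measurable_id
lemma measurable_HMap3 : Measurable (HMap 3) := by
  rw [HMap_three]
  exact (measurable_id.div (measurable_const.sub measurable_id)).min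
    ((measurable_const.sub measurable_id).div measurable_id)
lemma measurable_HMap4 : Measurable (HMap 4) := by
  rw [HMap_four]; exact measurable_id.div (measurable_const.add measurable_id)

lemma id1 {k : ℕ → ℕ} (hk : ∀ i, 1 ≤ k i) : (1 + cfVal k)⁻¹ = cfVal (consg 1 k) := by
  rw [cfVal_rec (consg 1 k) (good_consg le_rfl hk), shf_consg]
  norm_num [consg]

lemma id4 {k : ℕ → ℕ} (hk : ∀ i, 1 ≤ k i) : cfVal k / (1 + cfVal k) = cfVal (bump k) := by
  have hy0 := cfVal_pos (shf k) (good_shf hk)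
  have hc : (1:ℝ) ≤ (k 0 : ℝ) := by exact_mod_cast hk 0
  rw [cfVal_rec (bump k) (good_bump hk), shf_bump, cfVal_rec k hk]
  have hb : ((bump k 0 : ℕ) : ℝ) = (k 0 : ℝ) + 1 := by simp [bump]
  rw [hb]
  set y := cfVal (shf k)
  set c := (k 0 : ℝ)
  have h1 : c + y ≠ 0 := by positivity
  have h2 : c + 1 + y ≠ 0 := by positivity
  field_simp
  ring

lemma id2 {k : ℕ → ℕ} (hk : ∀ i, 1 ≤ k i) : 1 - cfVal k = cfVal (T2 k) := by
  have hy0 := cfVal_pos (shf k) (good_shf hk)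
  have hc : (1:ℝ) ≤ (k 0 : ℝ) := by exact_mod_cast hk 0
  by_cases h0 : k 0 = 1
  · rw [T2, if_pos h0]
    rw [← id4 (good_shf hk)]
    rw [cfVal_rec k hk, h0]
    set y := cfVal (shf k)
    have h1 : (1:ℝ) + y ≠ 0 := by positivity
    push_cast
    field_simp
    ring
  · have h2 : 2 ≤ k 0 := by have := hk 0; omega
    rw [T2, if_neg h0]
    rw [← id1 (good_dec hk h2)]
    rw [cfVal_rec (dec k) (good_dec hk h2), shf_dec, cfVal_rec k hk]
    have hd : ((dec k 0 : ℕ) : ℝ) = (k 0 : ℝ) - 1 := by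
      simp only [dec, if_pos rfl]
      push_cast [Nat.cast_sub (by omega : 1 ≤ k 0)]
      ring
    rw [hd]
    have hc2 : (2:ℝ) ≤ (k 0 : ℝ) := by exact_mod_cast h2
    set y := cfVal (shf k)
    set c := (k 0 : ℝ)
    have h1 : c + y ≠ 0 := by positivity
    have h3 : c - 1 + y > 0 := by linarith
    have h4 : (1:ℝ) + (c - 1 + y)⁻¹ > 0 := by positivity
    field_simp
    ring

lemma id3 {k : ℕ → ℕ} (hk : ∀ i, 1 ≤ k i) :
    min (cfVal k / (1 - cfVal k)) ((1 - cfVal k) / cfVal k) = cfVal (T3 k) := by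
  have hy0 := cfVal_pos (shf k) (good_shf hk)
  have hy1 := cfVal_lt_one (shf k) (good_shf hk)
  have hc : (1:ℝ) ≤ (k 0 : ℝ) := by exact_mod_cast hk 0
  have hrec := cfVal_rec k hk
  by_cases h0 : k 0 = 1
  · rw [T3, if_pos h0]
    rw [h0] at hrec; push_cast at hrec
    set y := cfVal (shf k)
    have h1 : (1:ℝ) + y ≠ 0 := by positivity
    have e1 : cfVal k / (1 - cfVal k) = y⁻¹ := by
      rw [hrec]; rw [div_eq_iff]
      · field_simp; ring
      · rw [hrec] at *; intro hcon
        have : (1:ℝ) + y ≠ 0 := h1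
        field_simp at hcon
        linarith
    have e2 : (1 - cfVal k) / cfVal k = y := by
      rw [hrec]; field_simp; ring
    rw [e1, e2]
    apply min_eq_right
    have : 1 ≤ y⁻¹ := one_le_inv_iff₀.mpr ⟨hy0, le_of_lt hy1⟩
    linarith
  · have h2 : 2 ≤ k 0 := by have := hk 0; omega
    rw [T3, if_neg h0]
    have hdrec : cfVal (dec k) = ((k 0 : ℝ) - 1 + cfVal (shf k))⁻¹ := by
      rw [cfVal_rec (dec k) (good_dec hk h2), shf_dec]
      have hd : ((dec k 0 : ℕ) : ℝ) = (k 0 : ℝ) - 1 := by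
        simp only [dec, if_pos rfl]
        push_cast [Nat.cast_sub (by omega : 1 ≤ k 0)]
        ring
      rw [hd]
    have hc2 : (2:ℝ) ≤ (k 0 : ℝ) := by exact_mod_cast h2
    set y := cfVal (shf k)
    set c := (k 0 : ℝ)
    have h3 : c - 1 + y > 0 := by linarith
    have h1 : c + y ≠ 0 := by positivity
    have e1 : cfVal k / (1 - cfVal k) = (c - 1 + y)⁻¹ := by
      rw [hrec, div_eq_iff]
      · field_simp; ring
      · intro hcon; field_simp at hcon; linarith
    have e2 : (1 - cfVal k) / cfVal k = c - 1 + y := by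
      rw [hrec]; field_simp; ring
    rw [e1, e2, hdrec]
    apply min_eq_left
    have hle : (c - 1 + y)⁻¹ ≤ 1 := by
      rw [inv_le_one_iff₀]; right; linarith
    linarith

section maps

variable {ν : Measure (ℕ → ℕ)} [IsProbabilityMeasure ν]

lemma meas_ne1 (hν : ∀ n g, ν (cyl n g) = ∏ i ∈ Finset.range n, w (g i)) :
    ν {f : ℕ → ℕ | f 0 ≠ 1} = 2⁻¹ := by
  have h1 : {f : ℕ → ℕ | f 0 = 1} = cyl 1 (fun _ => 1) := by
    ext f; simp [cyl, Nat.lt_one_iff]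
  have hv : ν {f : ℕ → ℕ | f 0 = 1} = 2⁻¹ := by
    rw [h1, hν]; simp [w_one]
  have h2 : {f : ℕ → ℕ | f 0 ≠ 1} = {f : ℕ → ℕ | f 0 = 1}ᶜ := rfl
  rw [h2, measure_compl measurableSet_eq1 (measure_ne_top ν _), hv, measure_univ]
  rw [← ENNReal.inv_two_add_inv_two, ENNReal.add_sub_cancel_right (by simp)]

lemma map_T3 (hν : ∀ n g, ν (cyl n g) = ∏ i ∈ Finset.range n, w (g i)) :
    ν.map T3 = ν := by
  haveI : IsProbabilityMeasure (ν.map T3) :=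
    Measure.isProbabilityMeasure_map measurable_T3.aemeasurable
  apply meas_ext
  intro n g
  rw [Measure.map_apply measurable_T3 measurableSet_cyl]
  rcases n with _ | n
  · rw [cyl_zero]; simp
  · have hsplit : T3 ⁻¹' cyl (n+1) g
        = cyl (n+2) (consg 1 g) ∪ cyl (n+1) (upd0 g (dval (g 0))) := by
      rw [← pre_A (n+1) g, ← pre_decB n g]
      ext f
      simp only [mem_preimage, mem_union, mem_setOf_eq, T3]
      by_cases h : f 0 = 1 <;> simp [h]
    have hdisj : Disjoint (cyl (n+2) (consg 1 g)) (cyl (n+1) (upd0 g (dval (g 0)))) := by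
      rw [Set.disjoint_left]
      intro f hf1 hf2
      have e1 := cyl_mem_zero hf1
      have e2 := cyl_mem_zero hf2
      rw [consg_zero] at e1
      rw [upd0_zero] at e2
      have := dval_ne_one (g 0)
      omega
    rw [hsplit, measure_union hdisj measurableSet_cyl, hν, hν, hν]
    rw [Finset.prod_range_succ' (fun i => w (consg 1 g i)) (n+1)]
    rw [Finset.prod_range_succ' (fun i => w (upd0 g (dval (g 0)) i)) n]
    simp only [consg_succ, consg_zero, upd0_succ, upd0_zero]
    rw [Finset.prod_range_succ' (fun i => w (g i)) n]
    set Q := ∏ i ∈ Finset.range n, w (g (i+1)) with hQ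
    rw [w_one]
    rcases hg : g 0 with _ | b
    · simp [dval, w_zero]
    · have hb : dval (b+1) = b + 2 := by simp [dval]
      rw [hb, w_half b]
      calc Q * w (b+1) * 2⁻¹ + Q * (2⁻¹ * w (b+1)) = (2⁻¹ + 2⁻¹) * (Q * w (b+1)) := by ring
        _ = Q * w (b+1) := by rw [ENNReal.inv_two_add_inv_two, one_mul]

lemma map_T2 (hν : ∀ n g, ν (cyl n g) = ∏ i ∈ Finset.range n, w (g i)) :
    ν.map T2 = ν := by
  haveI : IsProbabilityMeasure (ν.map T2) :=
    Measure.isProbabilityMeasure_map measurable_T2.aemeasurable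
  apply meas_ext
  intro n g
  rw [Measure.map_apply measurable_T2 measurableSet_cyl]
  rcases n with _ | n
  · rw [cyl_zero]; simp
  · have hsplit : T2 ⁻¹' cyl (n+1) g
        = {f : ℕ → ℕ | f 0 = 1 ∧ shf f ∈ bump ⁻¹' cyl (n+1) g}
          ∪ {f : ℕ → ℕ | f 0 ≠ 1 ∧ 1 = g 0 ∧ dec f ∈ cyl n (shf g)} := by
      ext f
      simp only [mem_preimage, mem_union, mem_setOf_eq, T2, mem_cyl_succ, shf_consg, consg_zero]
      by_cases h : f 0 = 1 <;> simp [h, shf_consg]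
    rcases hg0 : g 0 with _ | g0'
    · -- g 0 = 0 : empty
      have hempty : T2 ⁻¹' cyl (n+1) g = ∅ := by
        rw [hsplit, pre_bump, if_pos hg0]
        ext f; simp [hg0]
      rw [hempty, hν, Finset.prod_range_succ' (fun i => w (g i)) n]
      simp [hg0, w_zero]
    rcases g0' with _ | b
    · -- g 0 = 1
      have hA : {f : ℕ → ℕ | f 0 = 1 ∧ shf f ∈ bump ⁻¹' cyl (n+1) g}
          = cyl (n+2) (consg 1 (upd0 g (g 0 - 1))) := by
        rw [pre_bump, if_neg (by omega), ← pre_A]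
      have hB1 : {f : ℕ → ℕ | f 0 ≠ 1 ∧ 1 = g 0 ∧ dec f ∈ cyl n (shf g)}
          = {f : ℕ → ℕ | f 0 ≠ 1 ∧ dec f ∈ cyl n (shf g)} := by
        ext f; simp only [mem_setOf_eq]
        constructor
        · rintro ⟨a1, -, a3⟩; exact ⟨a1, a3⟩
        · rintro ⟨a1, a3⟩; exact ⟨a1, by omega, a3⟩
      have hAmeas : ν (cyl (n+2) (consg 1 (upd0 g (g 0 - 1)))) = 0 := by
        rw [hν]
        refine Finset.prod_eq_zero (Finset.mem_range.mpr (show (1:ℕ) < n+2 by omega)) ?_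
        rw [consg_succ, upd0_zero, show g 0 - 1 = 0 by omega, w_zero]
      rcases n with _ | m
      · -- n = 0
        have hB2 : {f : ℕ → ℕ | f 0 ≠ 1 ∧ dec f ∈ cyl 0 (shf g)} = {f : ℕ → ℕ | f 0 ≠ 1} := by
          ext f; simp [cyl_zero]
        have hm : MeasurableSet {f : ℕ → ℕ | f 0 ≠ 1} := measurableSet_eq1.compl
        have hdisj : Disjoint (cyl (0+2) (consg 1 (upd0 g (g 0 - 1))))
            {f : ℕ → ℕ | f 0 ≠ 1} := by
          rw [Set.disjoint_left]
          intro f hf1 hf2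
          have e1 := cyl_mem_zero hf1
          rw [consg_zero] at e1
          exact hf2 e1
        rw [hsplit, hA, hB1, hB2, measure_union hdisj hm, hAmeas, meas_ne1 hν, hν]
        simp [hg0, w_one]
      · -- n = m+1
        have hdisj : Disjoint (cyl (m+1+2) (consg 1 (upd0 g (g 0 - 1))))
            (cyl (m+1) (upd0 (shf g) (dval (shf g 0)))) := by
          rw [Set.disjoint_left]
          intro f hf1 hf2
          have e1 := cyl_mem_zero hf1
          rcases m with _ | m'
          · have e2 := cyl_mem_zero (g := upd0 (shf g) (dval (shf g 0))) hf2
            rw [consg_zero] at e1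
            rw [upd0_zero] at e2
            have := dval_ne_one (shf g 0)
            omega
          · have e2 := cyl_mem_zero (g := upd0 (shf g) (dval (shf g 0))) hf2
            rw [consg_zero] at e1
            rw [upd0_zero] at e2
            have := dval_ne_one (shf g 0)
            omega
        rw [hsplit, hA, hB1, pre_decB m (shf g), measure_union hdisj measurableSet_cyl,
          hAmeas, hν, hν, zero_add]
        rw [Finset.prod_range_succ' (fun i => w (upd0 (shf g) (dval (shf g 0)) i)) m]
        rw [Finset.prod_range_succ' (fun i => w (g i)) (m+1),
          Finset.prod_range_succ' (fun i => w (g (i+1))) m]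
        simp only [upd0_succ, upd0_zero, shf_app]
        rw [hg0, w_one]
        set Q := ∏ i ∈ Finset.range m, w (g (i+1+1)) with hQ
        rcases hg1 : g 1 with _ | c
        · simp [dval, w_zero]
        · have hc : dval (c+1) = c + 2 := by simp [dval]
          rw [hc, w_half c]
          ring
    · -- g 0 = b + 2
      have hA : {f : ℕ → ℕ | f 0 = 1 ∧ shf f ∈ bump ⁻¹' cyl (n+1) g}
          = cyl (n+2) (consg 1 (upd0 g (g 0 - 1))) := by
        rw [pre_bump, if_neg (by omega), ← pre_A]
      have hB1 : {f : ℕ → ℕ | f 0 ≠ 1 ∧ 1 = g 0 ∧ dec f ∈ cyl n (shf g)} = ∅ := by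
        ext f; simp only [mem_setOf_eq, mem_empty_iff_false, iff_false]
        rintro ⟨-, h1, -⟩; omega
      rw [hsplit, hA, hB1, union_empty, hν, hν]
      rw [Finset.prod_range_succ' (fun i => w (consg 1 (upd0 g (g 0 - 1)) i)) (n+1)]
      simp only [consg_succ, consg_zero]
      rw [Finset.prod_range_succ' (fun i => w (upd0 g (g 0 - 1) i)) n,
        Finset.prod_range_succ' (fun i => w (g i)) n]
      simp only [upd0_succ, upd0_zero]
      rw [show g 0 - 1 = b + 1 by omega, show g 0 = b + 2 by omega, w_one, w_half b]
      ring

lemma map_cons_bump (hν : ∀ n g, ν (cyl n g) = ∏ i ∈ Finset.range n, w (g i)) :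
    ν.map (consg 1) + ν.map bump = (2:ℝ≥0∞) • ν := by
  haveI : IsProbabilityMeasure (ν.map (consg 1)) :=
    Measure.isProbabilityMeasure_map measurable_consg1.aemeasurable
  haveI : IsProbabilityMeasure (ν.map bump) :=
    Measure.isProbabilityMeasure_map measurable_bump.aemeasurable
  haveI : IsFiniteMeasure ((2:ℝ≥0∞) • ν) := by
    constructor
    rw [Measure.smul_apply, measure_univ, smul_eq_mul, mul_one]
    exact ENNReal.ofNat_lt_top
  apply meas_ext
  intro n g
  rw [Measure.add_apply, Measure.smul_apply, smul_eq_mul,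
    Measure.map_apply measurable_consg1 measurableSet_cyl,
    Measure.map_apply measurable_bump measurableSet_cyl]
  rcases n with _ | n
  · rw [cyl_zero]
    simp only [preimage_univ, measure_univ, mul_one]
    exact one_add_one_eq_two
  · rcases hg0 : g 0 with _ | g0'
    · rw [pre_consg, pre_bump, if_neg (by omega), if_pos hg0, hν,
        Finset.prod_range_succ' (fun i => w (g i)) n]
      simp [hg0, w_zero]
    rcases g0' with _ | b
    · rw [pre_consg, pre_bump, if_pos (by omega), if_neg (by omega), hν, hν, hν,
        Finset.prod_range_succ' (fun i => w (upd0 g (g 0 - 1) i)) n,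
        Finset.prod_range_succ' (fun i => w (g i)) n]
      simp only [upd0_succ, upd0_zero, shf_app]
      rw [show g 0 - 1 = 0 by omega, show g 0 = 1 by omega, w_zero, w_one, mul_zero, add_zero]
      set Q := ∏ i ∈ Finset.range n, w (g (i+1)) with hQ
      have h2 : (2:ℝ≥0∞) * (Q * 2⁻¹) = (2 * 2⁻¹) * Q := by ring
      rw [h2, ENNReal.mul_inv_cancel (by norm_num) (ENNReal.ofNat_ne_top (n := 2)), one_mul]
    · rw [pre_consg, pre_bump, if_neg (by omega), if_neg (by omega), hν, hν,
        Finset.prod_range_succ' (fun i => w (upd0 g (g 0 - 1) i)) n,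
        Finset.prod_range_succ' (fun i => w (g i)) n]
      simp only [upd0_succ, upd0_zero]
      rw [show g 0 - 1 = b + 1 by omega, show g 0 = b + 2 by omega, w_half b,
        measure_empty, zero_add]
      set Q := ∏ i ∈ Finset.range n, w (g (i+1)) with hQ
      have h2 : (2:ℝ≥0∞) * (Q * (2⁻¹ * w (b+1))) = (2 * 2⁻¹) * (Q * w (b+1)) := by ring
      rw [h2, ENNReal.mul_inv_cancel (by norm_num) (ENNReal.ofNat_ne_top (n := 2)), one_mul]

end maps

end S12

theorem stmt12 (μ : Measure ℝ) (hμ : IsMuStar μ) :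
    (9 : ℝ≥0∞)⁻¹ • μ.map (HMap 0) +
      (2 / 9 : ℝ≥0∞) • ∑ i : Fin 4, μ.map (HMap i.succ) = μ := by
  classical
  obtain ⟨Ω, mΩ, P, K, hP, hK, hind, hlaw, hμeq⟩ := hμ
  have hKvec : Measurable (fun ω i => K i ω) := measurable_pi_lambda _ hK
  set ν0 : Measure (ℕ → ℕ) := P.map (fun ω i => K i ω) with hν0def
  haveI : IsProbabilityMeasure ν0 := Measure.isProbabilityMeasure_map hKvec.aemeasurable
  have hw : ∀ (i a : ℕ), P (K i ⁻¹' {a}) = S12.w a := fun i a => by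
    rw [← Measure.map_apply (hK i) (measurableSet_singleton a), hlaw i]; rfl
  have hν : ∀ n g, ν0 (S12.cyl n g) = ∏ i ∈ Finset.range n, S12.w (g i) := by
    intro n g
    rw [hν0def, Measure.map_apply hKvec S12.measurableSet_cyl]
    have hpre : (fun ω i => K i ω) ⁻¹' S12.cyl n g = ⋂ i ∈ Finset.range n, K i ⁻¹' {g i} := by
      ext ω
      simp [S12.cyl, Finset.mem_range]
    rw [hpre, hind.measure_inter_preimage_eq_mul (Finset.range n)
      (sets := fun i => ({g i} : Set ℕ)) (fun i _ => measurableSet_singleton _)]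
    exact Finset.prod_congr rfl fun i _ => hw i (g i)
  have haeP : ∀ᵐ ω ∂P, ∀ i, 1 ≤ K i ω := by
    rw [MeasureTheory.ae_all_iff]
    intro i
    rw [ae_iff]
    have hset : {ω | ¬1 ≤ K i ω} = K i ⁻¹' {0} := by ext ω; simp [Nat.lt_one_iff]
    rw [hset, hw i 0, S12.w_zero]
  have hGmeas : MeasurableSet {k : ℕ → ℕ | ∀ i, 1 ≤ k i} := by
    have h : {k : ℕ → ℕ | ∀ i, 1 ≤ k i} = ⋂ i, (fun k : ℕ → ℕ => k i) ⁻¹' {m | 1 ≤ m} := by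
      ext k; simp
    rw [h]
    exact MeasurableSet.iInter fun i => measurable_pi_apply i trivial
  have haeν : ∀ᵐ k ∂ν0, ∀ i, 1 ≤ k i := by
    rw [hν0def, ae_map_iff hKvec.aemeasurable hGmeas]
    exact haeP
  have htend : ∀ᵐ k ∂ν0, Filter.Tendsto (fun n => S12.F n k) Filter.atTop (nhds (cfVal k)) :=
    haeν.mono fun k hk => S12.tendsto_F_cfVal k hk
  have hcf : AEMeasurable cfVal ν0 :=
    aemeasurable_of_tendsto_metrizable_ae Filter.atTop
      (fun n => (S12.measurable_F n).aemeasurable) htend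
  have hmap0 : μ = ν0.map cfVal := by
    rw [hμeq, hν0def, AEMeasurable.map_map_of_aemeasurable hcf hKvec.aemeasurable]
    rfl
  have key : ∀ (T : (ℕ → ℕ) → (ℕ → ℕ)), Measurable T →
      ∀ (h : ℝ → ℝ), Measurable h →
      (∀ k : ℕ → ℕ, (∀ j, 1 ≤ k j) → h (cfVal k) = cfVal (T k)) →
      AEMeasurable cfVal (ν0.map T) →
      μ.map h = (ν0.map T).map cfVal := by
    intro T hT h hh hpt hcfT
    have hX : AEMeasurable (fun ω => cfVal (fun i => K i ω)) P :=
      hcf.comp_measurable hKvec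
    have e1 : μ.map h = P.map (h ∘ fun ω => cfVal (fun i => K i ω)) := by
      rw [hμeq]
      exact AEMeasurable.map_map_of_aemeasurable hh.aemeasurable hX
    have e2 : (h ∘ fun ω => cfVal (fun i => K i ω)) =ᵐ[P]
        ((cfVal ∘ T) ∘ fun ω i => K i ω) := by
      filter_upwards [haeP] with ω hω
      exact hpt (fun i => K i ω) hω
    have hg : AEMeasurable (cfVal ∘ T) ν0 := hcfT.comp_aemeasurable hT.aemeasurable
    rw [e1, Measure.map_congr e2, AEMeasurable.map_map_of_aemeasurable hcfT hT.aemeasurable]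
    exact (AEMeasurable.map_map_of_aemeasurable hg hKvec.aemeasurable).symm
  have hcf2 : AEMeasurable cfVal (ν0.map S12.T2) := by
    rw [S12.map_T2 hν]; exact hcf
  have hcf3 : AEMeasurable cfVal (ν0.map S12.T3) := by
    rw [S12.map_T3 hν]; exact hcf
  have h2 : μ.map (HMap 2) = μ := by
    rw [key S12.T2 S12.measurable_T2 (HMap 2) S12.measurable_HMap2
      (fun k hk => S12.id2 hk) hcf2, S12.map_T2 hν, ← hmap0]
  have h3 : μ.map (HMap 3) = μ := by
    rw [key S12.T3 S12.measurable_T3 (HMap 3) S12.measurable_HMap3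
      (fun k hk => S12.id3 hk) hcf3, S12.map_T3 hν, ← hmap0]
  have hsum := S12.map_cons_bump (ν := ν0) hν
  have hle1 : ν0.map (S12.consg 1) ≤ (2:ℝ≥0∞) • ν0 := by
    rw [← hsum]; exact Measure.le_add_right (le_refl _)
  have hle4 : ν0.map S12.bump ≤ (2:ℝ≥0∞) • ν0 := by
    rw [← hsum]; exact Measure.le_add_left (le_refl _)
  have hcfs : AEMeasurable cfVal ((2:ℝ≥0∞) • ν0) := hcf.smul_measure 2
  have hcf1 : AEMeasurable cfVal (ν0.map (S12.consg 1)) := hcfs.mono_measure hle1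
  have hcf4 : AEMeasurable cfVal (ν0.map S12.bump) := hcfs.mono_measure hle4
  have e1 : μ.map (HMap 1) = (ν0.map (S12.consg 1)).map cfVal :=
    key (S12.consg 1) S12.measurable_consg1 (HMap 1) S12.measurable_HMap1
      (fun k hk => S12.id1 hk) hcf1
  have e4 : μ.map (HMap 4) = (ν0.map S12.bump).map cfVal :=
    key S12.bump S12.measurable_bump (HMap 4) S12.measurable_HMap4
      (fun k hk => S12.id4 hk) hcf4
  have hgm : Measurable (hcf.mk cfVal) := hcf.measurable_mk
  have hae0 : cfVal =ᵐ[ν0] hcf.mk cfVal := hcf.ae_eq_mk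
  have haes : cfVal =ᵐ[(2:ℝ≥0∞) • ν0] hcf.mk cfVal := Measure.ae_smul_measure hae0 2
  have hae1 : cfVal =ᵐ[ν0.map (S12.consg 1)] hcf.mk cfVal := haes.filter_mono (ae_mono hle1)
  have hae4 : cfVal =ᵐ[ν0.map S12.bump] hcf.mk cfVal := haes.filter_mono (ae_mono hle4)
  have h14 : μ.map (HMap 1) + μ.map (HMap 4) = (2:ℝ≥0∞) • μ := by
    rw [e1, e4, Measure.map_congr hae1, Measure.map_congr hae4,
      ← Measure.map_add _ _ hgm, hsum, Measure.map_smul, ← Measure.map_congr hae0, ← hmap0]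
  have h0 : μ.map (HMap 0) = μ := by
    have h : HMap 0 = id := rfl
    rw [h, Measure.map_id]
  have hsum4 : ∑ i : Fin 4, μ.map (HMap i.succ)
      = μ.map (HMap 1) + μ.map (HMap 2) + μ.map (HMap 3) + μ.map (HMap 4) := by
    rw [Fin.sum_univ_four]; rfl
  rw [h0, hsum4, h2, h3]
  have hre : μ.map (HMap 1) + μ + μ + μ.map (HMap 4)
      = (μ.map (HMap 1) + μ.map (HMap 4)) + (μ + μ) := by abel
  rw [hre, h14, ← two_smul ℝ≥0∞ μ, ← add_smul]
  have h4 : ((2:ℝ≥0∞) + 2) = 4 := by norm_num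
  rw [h4, smul_smul, ← add_smul]
  have hc : (9:ℝ≥0∞)⁻¹ + 2 / 9 * 4 = 1 := by
    rw [div_eq_mul_inv, show (2:ℝ≥0∞) * 9⁻¹ * 4 = 8 * 9⁻¹ by ring,
      show (9:ℝ≥0∞)⁻¹ + 8 * 9⁻¹ = (1 + 8) * 9⁻¹ by ring,
      show (1:ℝ≥0∞) + 8 = 9 by norm_num,
      ENNReal.mul_inv_cancel (by norm_num) (by norm_num)]
  rw [hc, one_smul]
end
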